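/- arXiv:2211.01252 — 4 statements merged into one kernel-verified Lean document; each statement's English description precedes it below -/
import Mathlib

section
/- For all n ≥ 1 and all j ∈ {0,1,2}, the algebraic normal form of the mod-3 function Mod_{3,j} : F_2^n → F_2 is the XOR over all μ ∈ {0,...,n} with μ ≢ 3−j (mod 3) of the complete degree-μ symmetric function C_n^μ(x) = ⊕_{S⊆[n], |S|=μ} ∏_{i∈S} x_i. -/
open Finset

/-- The complete degree-μ symmetric Boolean function over `F_2`. -/
def completeSym (n μ : ℕ) (x : Fin n → ZMod 2) : ZMod 2 :=
  ∑ S ∈ Finset.univ.powersetCard μ, ∏ i ∈ S, x i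

/-- `Mod_{3,j}` : zero iff the Hamming weight is `j` mod 3. -/
def mod3 (j : ℕ) {n : ℕ} (x : Fin n → ZMod 2) : ZMod 2 :=
  if (∑ i, (x i).val) % 3 = j then 0 else 1

lemma zmod2_val (z : ZMod 2) : z.val = if z = 1 then 1 else 0 := by revert z; decide

lemma zmod2_ne (z : ZMod 2) (h : ¬ z = 1) : z = 0 := by revert h; revert z; decide

lemma completeSym_eq (n μ : ℕ) (x : Fin n → ZMod 2) :
    completeSym n μ x = (Nat.choose (∑ i, (x i).val) μ : ZMod 2) := by
  classical
  set supp := Finset.univ.filter (fun i => x i = 1) with hsupp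
  have hw : (∑ i, (x i).val) = supp.card := by
    rw [hsupp, Finset.card_filter]
    exact Finset.sum_congr rfl (fun i _ => zmod2_val (x i))
  have hprod : ∀ S : Finset (Fin n), (∏ i ∈ S, x i) = if S ⊆ supp then 1 else 0 := by
    intro S
    split_ifs with h
    · exact Finset.prod_eq_one (fun i hi => by
        have := h hi; simp [hsupp] at this; exact this)
    · obtain ⟨i, hi, hix⟩ := not_subset.mp h
      have : x i = 0 := zmod2_ne (x i) (by simpa [hsupp] using hix)
      exact Finset.prod_eq_zero hi this
  rw [completeSym]
  rw [Finset.sum_congr rfl (fun S _ => hprod S)]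
  rw [← Finset.sum_filter]
  have hfil : (Finset.univ.powersetCard μ).filter (· ⊆ supp) = supp.powersetCard μ := by
    ext S
    simp [Finset.mem_powersetCard, and_comm]
  rw [hfil]
  simp [Finset.card_powersetCard, hw]

def g (r w : ℕ) : ZMod 2 :=
  ∑ μ ∈ Finset.range (w+1), if μ % 3 = r then (Nat.choose w μ : ZMod 2) else 0

lemma g_succ (r w : ℕ) (hr : r < 3) : g r (w+1) = g ((r+2) % 3) w + g r w := by
  have h1 : g r (w+1)
      = (∑ μ ∈ Finset.range (w+1), if (μ+1) % 3 = r then (Nat.choose (w+1) (μ+1) : ZMod 2) else 0)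
        + (if 0 % 3 = r then (Nat.choose (w+1) 0 : ZMod 2) else 0) := by
    rw [g, Finset.sum_range_succ']
  rw [h1]
  have h2 : ∀ μ, (if (μ+1) % 3 = r then (Nat.choose (w+1) (μ+1) : ZMod 2) else 0)
      = (if μ % 3 = (r+2) % 3 then (Nat.choose w μ : ZMod 2) else 0)
        + (if (μ+1) % 3 = r then (Nat.choose w (μ+1) : ZMod 2) else 0) := by
    intro μ
    have hiff : (μ+1) % 3 = r ↔ μ % 3 = (r+2) % 3 := by omega
    rw [Nat.choose_succ_succ', Nat.cast_add]
    by_cases h : (μ+1) % 3 = r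
    · rw [if_pos h, if_pos (hiff.mp h), if_pos h]
    · rw [if_neg h, if_neg (fun hh => h (hiff.mpr hh)), if_neg h, add_zero]
  rw [Finset.sum_congr rfl (fun μ _ => h2 μ), Finset.sum_add_distrib]
  have h3 : ((∑ μ ∈ Finset.range (w+1), if (μ+1) % 3 = r then (Nat.choose w (μ+1) : ZMod 2) else 0)
      + (if 0 % 3 = r then (Nat.choose (w+1) 0 : ZMod 2) else 0)) = g r w := by
    have e0 : (if 0 % 3 = r then (Nat.choose (w+1) 0 : ZMod 2) else 0)
        = (if 0 % 3 = r then (Nat.choose w 0 : ZMod 2) else 0) := by simp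
    rw [e0]
    have h4 := (Finset.sum_range_succ'
      (fun μ => if μ % 3 = r then (Nat.choose w μ : ZMod 2) else 0) (w+1)).symm
    rw [h4, Finset.sum_range_succ]
    have : (Nat.choose w (w+1) : ZMod 2) = 0 := by
      rw [Nat.choose_eq_zero_of_lt (by omega)]; simp
    rw [g]
    split_ifs with h <;> simp [this]
  rw [add_assoc, h3]; rfl

lemma g_val (w : ℕ) : 1 ≤ w → ∀ r, r < 3 →
    g r w = if (w + r) % 3 = 0 then 0 else 1 := by
  induction w with
  | zero => omega
  | succ w ih =>
    intro _ r hr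
    rcases Nat.eq_zero_or_pos w with h1 | h1
    · subst h1
      rw [g]
      interval_cases r <;> decide
    · rw [g_succ r w hr, ih h1 r hr, ih h1 ((r+2) % 3) (by omega)]
      rcases (by omega : (w + r) % 3 = 0 ∨ (w + r) % 3 = 1 ∨ (w + r) % 3 = 2) with h | h | h
      · rw [if_neg (by omega), if_pos (by omega), if_neg (by omega)]; decide
      · rw [if_pos (by omega), if_neg (by omega), if_neg (by omega)]; decide
      · rw [if_neg (by omega), if_neg (by omega), if_pos (by omega)]; decide

/-- The ANF of `Mod_{3,j}` is the XOR of all `C_n^μ` with `μ ≢ 3 - j (mod 3)`. -/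
theorem mod3_anf (n : ℕ) (hn : 1 ≤ n) (j : ℕ) (hj : j < 3) (x : Fin n → ZMod 2) :
    mod3 j x =
      ∑ μ ∈ (Finset.range (n + 1)).filter (fun μ => ¬ (μ % 3 = (3 - j) % 3)),
        completeSym n μ x := by
  classical
  set w := ∑ i, (x i).val with hwdef
  set r := (3 - j) % 3 with hrdef
  have hr : r < 3 := by omega
  have hwn : w ≤ n := by
    calc w ≤ ∑ _i : Fin n, 1 := Finset.sum_le_sum (fun i _ => by
            have := (x i).val_lt; omega)
    _ = n := by simp
  -- rewrite RHS
  have hrhs : (∑ μ ∈ (Finset.range (n + 1)).filter (fun μ => ¬ (μ % 3 = r)),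
        completeSym n μ x)
      = (∑ μ ∈ Finset.range (n+1), (Nat.choose w μ : ZMod 2)) + g r w := by
    rw [Finset.sum_congr rfl (fun μ _ => completeSym_eq n μ x)]
    rw [Finset.sum_filter]
    have hpt : ∀ μ, (if ¬ (μ % 3 = r) then (Nat.choose w μ : ZMod 2) else 0)
        = (Nat.choose w μ : ZMod 2) + (if μ % 3 = r then (Nat.choose w μ : ZMod 2) else 0) := by
      intro μ
      by_cases h : μ % 3 = r
      · rw [if_neg (by simpa using h), if_pos h, CharTwo.add_self_eq_zero]
      · rw [if_pos h, if_neg h, add_zero]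
    rw [Finset.sum_congr rfl (fun μ _ => hpt μ), Finset.sum_add_distrib]
    congr 1
    -- truncate the second sum to range (w+1)
    rw [g]
    apply (Finset.sum_subset (Finset.range_subset_range.mpr (by omega)) _).symm
    intro μ _ hμ
    rw [Nat.choose_eq_zero_of_lt (by simp at hμ ⊢; omega)]
    simp
  rw [hrhs]
  have hfull : (∑ μ ∈ Finset.range (n+1), (Nat.choose w μ : ZMod 2)) = (2^w : ZMod 2) := by
    rw [← Finset.sum_subset (Finset.range_subset_range.mpr (show w+1 ≤ n+1 by omega))
      (fun μ _ hμ => by rw [Nat.choose_eq_zero_of_lt (by simp at hμ ⊢; omega)]; simp)]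
    rw [← Nat.cast_sum, Nat.sum_range_choose]
    push_cast
    ring
  rw [hfull]
  rcases Nat.eq_zero_or_pos w with h0 | h0
  · have hm : mod3 j x = if 0 % 3 = j then (0 : ZMod 2) else 1 := by
      rw [mod3, ← hwdef, h0]
    have hg : g r 0 = if 0 % 3 = r then 1 else 0 := by rw [g]; simp
    rw [hm, h0, hg]
    by_cases hj0 : j = 0
    · rw [if_pos (by omega), if_pos (by omega)]; decide
    · rw [if_neg (by omega), if_neg (by omega)]; decide
  · rw [g_val w h0 r hr]
    have h2 : (2 : ZMod 2)^w = 0 := by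
      rw [show (2 : ZMod 2) = 0 from rfl, zero_pow (by omega)]
    rw [h2, zero_add, mod3, ← hwdef]
    by_cases h : w % 3 = j
    · rw [if_pos h, if_pos (by omega)]
    · rw [if_neg h, if_neg (by omega)]
end

section
/- Let n ≥ 1 and index rows and columns of a (2^n − 1) × (2^n − 1) real matrix by nonzero vectors y, s ∈ F_2^n. Define M_{y,s} = 2^{|y|−1} · χ(s ∩ y), where χ(A) = 1 if A ≠ ∅ and 0 otherwise, and where s ∩ y denotes the intersection of supports. Then M is invertible with inverse given by (M^{-1})_{s,y} = ((−1)^{s·y+1} / 2^{|y|−1}) · (1 − χ(s̄ ∩ ȳ)), where s̄ denotes the complement of the support of s in [n] and s·y is the size of the intersection of supports. -/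
open Finset

/-- The support of a vector in `F_2^n`. -/
def supp {n : ℕ} (s : Fin n → ZMod 2) : Finset (Fin n) :=
  Finset.univ.filter (fun i => s i = 1)

namespace SierpAux

variable {n : ℕ}

lemma mem_supp {s : Fin n → ZMod 2} {i : Fin n} : i ∈ supp s ↔ s i = 1 := by
  simp [supp]

lemma zmod2_cases : ∀ a : ZMod 2, a = 0 ∨ a = 1 := by decide

lemma supp_bijective : Function.Bijective (supp (n := n)) := by
  constructor
  · intro s t h
    funext i
    have hi := Finset.ext_iff.mp h i
    simp only [mem_supp] at hi
    rcases zmod2_cases (s i) with h1 | h1 <;> rcases zmod2_cases (t i) with h2 | h2 <;>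
      simp_all
  · intro A
    refine ⟨fun i => if i ∈ A then 1 else 0, ?_⟩
    ext i
    by_cases h : i ∈ A <;> simp [mem_supp, h]

lemma supp_zero : supp (0 : Fin n → ZMod 2) = ∅ := by
  ext i; simp [mem_supp]

lemma sum_supp (f : Finset (Fin n) → ℚ) (hf : f ∅ = 0) :
    ∑ s : {s : Fin n → ZMod 2 // s ≠ 0}, f (supp s.1) = ∑ A : Finset (Fin n), f A := by
  have h2 : ∑ s : Fin n → ZMod 2, f (supp s) = ∑ A : Finset (Fin n), f A :=
    Fintype.sum_bijective supp supp_bijective _ _ (fun s => rfl)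
  have h1 : ∑ s : {s : Fin n → ZMod 2 // s ≠ 0}, f (supp s.1)
      = ∑ s ∈ Finset.univ.erase (0 : Fin n → ZMod 2), f (supp s) := by
    exact (Finset.sum_subtype (p := fun s : Fin n → ZMod 2 => s ≠ 0) (Finset.univ.erase (0 : Fin n → ZMod 2)) (fun x => by simp [Finset.mem_erase]) (fun s => f (supp s))).symm
  rw [h1, ← h2, ← Finset.add_sum_erase _ _ (Finset.mem_univ (0 : Fin n → ZMod 2)),
    supp_zero, hf, zero_add]

lemma sum_pow_neg_one (A : Finset (Fin n)) :
    ∑ t ∈ A.powerset, (-1 : ℚ) ^ t.card = if A = ∅ then 1 else 0 := by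
  have h := Finset.sum_powerset_neg_one_pow_card (x := A)
  have : ((∑ t ∈ A.powerset, (-1 : ℤ) ^ t.card : ℤ) : ℚ)
      = ∑ t ∈ A.powerset, (-1 : ℚ) ^ t.card := by push_cast; rfl
  rw [← this, h]
  split <;> simp

lemma one_sub_ind (A C : Finset (Fin n)) :
    (1 : ℚ) - (if (Aᶜ ∩ Cᶜ).Nonempty then 1 else 0) = if Cᶜ ⊆ A then 1 else 0 := by
  by_cases h : Cᶜ ⊆ A
  · rw [if_pos h, if_neg, sub_zero]
    rintro ⟨x, hx⟩
    simp only [Finset.mem_inter, Finset.mem_compl] at hx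
    exact hx.1 (h (Finset.mem_compl.mpr hx.2))
  · rw [if_neg h, if_pos, sub_self]
    obtain ⟨x, hx1, hx2⟩ := Finset.not_subset.mp h
    exact ⟨x, Finset.mem_inter.mpr ⟨Finset.mem_compl.mpr hx2, hx1⟩⟩

lemma key (C D : Finset (Fin n)) (hC : C.Nonempty) :
    ∑ A : Finset (Fin n), (if Cᶜ ⊆ A then (1 : ℚ) else 0) *
      ((if (A ∩ D).Nonempty then 1 else 0) * (-1) ^ (A ∩ C).card)
      = if C = D then -1 else 0 := by
  have step1 : ∑ A : Finset (Fin n), (if Cᶜ ⊆ A then (1 : ℚ) else 0) *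
      ((if (A ∩ D).Nonempty then 1 else 0) * (-1) ^ (A ∩ C).card)
      = ∑ A ∈ Finset.univ.filter (fun A => Cᶜ ⊆ A),
        (if (A ∩ D).Nonempty then 1 else 0) * (-1 : ℚ) ^ (A ∩ C).card := by
    rw [Finset.sum_filter]
    exact Finset.sum_congr rfl (fun A _ => by split <;> simp)
  have step2 : ∑ A ∈ Finset.univ.filter (fun A => Cᶜ ⊆ A),
        (if (A ∩ D).Nonempty then 1 else 0) * (-1 : ℚ) ^ (A ∩ C).card
      = ∑ t ∈ C.powerset,
        (if ((t ∪ Cᶜ) ∩ D).Nonempty then 1 else 0) * (-1 : ℚ) ^ t.card := by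
    refine Finset.sum_nbij' (fun A => A ∩ C) (fun t => t ∪ Cᶜ) ?_ ?_ ?_ ?_ ?_
    · intro A _; exact Finset.mem_powerset.mpr Finset.inter_subset_right
    · intro t _; simp
    · intro A hA
      simp only [Finset.mem_filter] at hA
      ext x
      simp only [Finset.mem_union, Finset.mem_inter, Finset.mem_compl]
      by_cases hx : x ∈ C
      · simp [hx]
      · simp [hx]
        exact hA.2 (Finset.mem_compl.mpr hx)
    · intro t ht
      rw [Finset.mem_powerset] at ht
      ext x
      simp only [Finset.mem_inter, Finset.mem_union, Finset.mem_compl]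
      constructor
      · rintro ⟨h1 | h1, h2⟩
        · exact h1
        · exact absurd h2 h1
      · intro hx; exact ⟨Or.inl hx, ht hx⟩
    · intro A hA
      simp only [Finset.mem_filter] at hA
      have hAeq : A ∩ C ∪ Cᶜ = A := by
        ext x
        simp only [Finset.mem_union, Finset.mem_inter, Finset.mem_compl]
        by_cases hx : x ∈ C
        · simp [hx]
        · simp [hx]
          exact hA.2 (Finset.mem_compl.mpr hx)
      simp only [hAeq, Finset.inter_assoc, Finset.inter_self]
  rw [step1, step2]
  by_cases h : (Cᶜ ∩ D).Nonempty
  · have hCD : C ≠ D := by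
      rintro rfl
      obtain ⟨x, hx⟩ := h
      simp only [Finset.mem_inter, Finset.mem_compl] at hx
      exact hx.1 hx.2
    rw [if_neg hCD]
    have : ∀ t ∈ C.powerset,
        (if ((t ∪ Cᶜ) ∩ D).Nonempty then (1:ℚ) else 0) * (-1 : ℚ) ^ t.card
        = (-1 : ℚ) ^ t.card := by
      intro t _
      rw [if_pos, one_mul]
      obtain ⟨x, hx⟩ := h
      simp only [Finset.mem_inter, Finset.mem_compl] at hx
      exact ⟨x, by simp [Finset.mem_inter, Finset.mem_union, hx.1, hx.2]⟩
    rw [Finset.sum_congr rfl this, sum_pow_neg_one,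
      if_neg (Finset.nonempty_iff_ne_empty.mp hC)]
  · have hDC : D ⊆ C := by
      intro x hx
      by_contra hxc
      exact h ⟨x, Finset.mem_inter.mpr ⟨Finset.mem_compl.mpr hxc, hx⟩⟩
    have hsimp : ∀ t ∈ C.powerset,
        (if ((t ∪ Cᶜ) ∩ D).Nonempty then (1:ℚ) else 0) * (-1 : ℚ) ^ t.card
        = (-1 : ℚ) ^ t.card - (if t ∩ D = ∅ then (-1 : ℚ) ^ t.card else 0) := by
      intro t _
      have hint : (t ∪ Cᶜ) ∩ D = t ∩ D := by
        rw [Finset.union_inter_distrib_right]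
        have : Cᶜ ∩ D = ∅ := Finset.not_nonempty_iff_eq_empty.mp h
        rw [this, Finset.union_empty]
      rw [hint]
      by_cases ht : (t ∩ D).Nonempty
      · rw [if_pos ht, if_neg (Finset.nonempty_iff_ne_empty.mp ht), one_mul, sub_zero]
      · rw [if_neg ht, if_pos (Finset.not_nonempty_iff_eq_empty.mp ht), zero_mul, sub_self]
    rw [Finset.sum_congr rfl hsimp, Finset.sum_sub_distrib, sum_pow_neg_one,
      if_neg (Finset.nonempty_iff_ne_empty.mp hC), ← Finset.sum_filter]
    have hfilter : C.powerset.filter (fun t => t ∩ D = ∅) = (C \ D).powerset := by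
      ext t
      simp only [Finset.mem_filter, Finset.mem_powerset, Finset.subset_sdiff,
        ← Finset.disjoint_iff_inter_eq_empty]
    rw [hfilter, sum_pow_neg_one]
    by_cases hCD : C = D
    · subst hCD; simp
    · rw [if_neg hCD,
        if_neg (fun hempty => hCD
          (Finset.Subset.antisymm (Finset.sdiff_eq_empty_iff_subset.mp hempty) hDC))]
      simp



variable {n : ℕ}

lemma supp_nonempty {s : Fin n → ZMod 2} (h : s ≠ 0) : (supp s).Nonempty :=
  Finset.nonempty_iff_ne_empty.mpr
    (fun he => h (supp_bijective.1 (he.trans supp_zero.symm)))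

lemma MN_entry (C D : Finset (Fin n)) (hC : C.Nonempty) :
    ∑ s : {s : Fin n → ZMod 2 // s ≠ 0},
      (2 ^ (D.card - 1) * (if (supp s.1 ∩ D).Nonempty then (1 : ℚ) else 0)) *
      ((-1) ^ ((supp s.1 ∩ C).card + 1) / 2 ^ (C.card - 1) *
        (1 - if ((supp s.1)ᶜ ∩ Cᶜ).Nonempty then 1 else 0))
      = if C = D then 1 else 0 := by
  calc
    ∑ s : {s : Fin n → ZMod 2 // s ≠ 0},
      (2 ^ (D.card - 1) * (if (supp s.1 ∩ D).Nonempty then (1 : ℚ) else 0)) *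
      ((-1) ^ ((supp s.1 ∩ C).card + 1) / 2 ^ (C.card - 1) *
        (1 - if ((supp s.1)ᶜ ∩ Cᶜ).Nonempty then 1 else 0))
        = ∑ A : Finset (Fin n),
          (2 ^ (D.card - 1) * (if (A ∩ D).Nonempty then (1 : ℚ) else 0)) *
          ((-1) ^ ((A ∩ C).card + 1) / 2 ^ (C.card - 1) *
            (1 - if (Aᶜ ∩ Cᶜ).Nonempty then 1 else 0)) := by
      exact sum_supp (fun A =>
        (2 ^ (D.card - 1) * (if (A ∩ D).Nonempty then (1 : ℚ) else 0)) *
        ((-1) ^ ((A ∩ C).card + 1) / 2 ^ (C.card - 1) *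
          (1 - if (Aᶜ ∩ Cᶜ).Nonempty then 1 else 0))) (by simp)
    _ = -(2 ^ (D.card - 1) / 2 ^ (C.card - 1)) *
        ∑ A : Finset (Fin n), (if Cᶜ ⊆ A then (1 : ℚ) else 0) *
          ((if (A ∩ D).Nonempty then 1 else 0) * (-1) ^ (A ∩ C).card) := by
      rw [Finset.mul_sum]
      refine Finset.sum_congr rfl fun A _ => ?_
      rw [one_sub_ind A C, pow_succ]
      ring
    _ = if C = D then 1 else 0 := by
      rw [key C D hC]
      by_cases hEq : C = D
      · subst hEq
        rw [if_pos rfl, if_pos rfl, div_self (by positivity)]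
        norm_num
      · rw [if_neg hEq, if_neg hEq, mul_zero]

lemma NM_entry (C D : Finset (Fin n)) (hC : C.Nonempty) :
    ∑ y : {s : Fin n → ZMod 2 // s ≠ 0},
      ((-1) ^ ((C ∩ supp y.1).card + 1) / 2 ^ ((supp y.1).card - 1) *
        (1 - if (Cᶜ ∩ (supp y.1)ᶜ).Nonempty then 1 else 0)) *
      (2 ^ ((supp y.1).card - 1) * (if (D ∩ supp y.1).Nonempty then (1 : ℚ) else 0))
      = if C = D then 1 else 0 := by
  calc
    ∑ y : {s : Fin n → ZMod 2 // s ≠ 0},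
      ((-1) ^ ((C ∩ supp y.1).card + 1) / 2 ^ ((supp y.1).card - 1) *
        (1 - if (Cᶜ ∩ (supp y.1)ᶜ).Nonempty then 1 else 0)) *
      (2 ^ ((supp y.1).card - 1) * (if (D ∩ supp y.1).Nonempty then (1 : ℚ) else 0))
        = ∑ A : Finset (Fin n),
          ((-1) ^ ((C ∩ A).card + 1) / 2 ^ (A.card - 1) *
            (1 - if (Cᶜ ∩ Aᶜ).Nonempty then (1 : ℚ) else 0)) *
          (2 ^ (A.card - 1) * (if (D ∩ A).Nonempty then 1 else 0)) := by
      exact sum_supp (fun A =>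
        ((-1) ^ ((C ∩ A).card + 1) / 2 ^ (A.card - 1) *
          (1 - if (Cᶜ ∩ Aᶜ).Nonempty then (1 : ℚ) else 0)) *
        (2 ^ (A.card - 1) * (if (D ∩ A).Nonempty then 1 else 0))) (by simp)
    _ = -∑ A : Finset (Fin n), (if Cᶜ ⊆ A then (1 : ℚ) else 0) *
          ((if (A ∩ D).Nonempty then 1 else 0) * (-1) ^ (A ∩ C).card) := by
      rw [← Finset.sum_neg_distrib]
      refine Finset.sum_congr rfl fun A _ => ?_
      have h2 : (2 : ℚ) ^ (A.card - 1) ≠ 0 := by positivity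
      rw [Finset.inter_comm C A, Finset.inter_comm Cᶜ Aᶜ, Finset.inter_comm D A,
        one_sub_ind A C]
      have : ((-1 : ℚ) ^ ((A ∩ C).card + 1) / 2 ^ (A.card - 1) *
            (if Cᶜ ⊆ A then (1 : ℚ) else 0)) *
          (2 ^ (A.card - 1) * (if (A ∩ D).Nonempty then 1 else 0))
          = ((-1) ^ ((A ∩ C).card + 1) * (if Cᶜ ⊆ A then (1 : ℚ) else 0) *
            (if (A ∩ D).Nonempty then 1 else 0)) * (2 ^ (A.card - 1) / 2 ^ (A.card - 1)) := by
        ring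
      rw [this, div_self h2, mul_one, pow_succ]
      ring
    _ = if C = D then 1 else 0 := by
      rw [key C D hC]
      by_cases hEq : C = D
      · rw [if_pos hEq, if_pos hEq]; norm_num
      · rw [if_neg hEq, if_neg hEq, neg_zero]

end SierpAux

/-- The matrix `M_{y,s} = 2^{|y|-1} χ(s ∩ y)` (rows/columns indexed by nonzero vectors)
is invertible, with inverse `(M⁻¹)_{s,y} = ((-1)^{s·y+1}/2^{|y|-1})(1 - χ(s̄ ∩ ȳ))`. -/
theorem sierpinski_inverse (n : ℕ) (hn : 1 ≤ n)
    (M N : Matrix {s : Fin n → ZMod 2 // s ≠ 0} {s : Fin n → ZMod 2 // s ≠ 0} ℚ)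
    (hM : ∀ y s, M y s =
      2 ^ ((supp y.1).card - 1) * (if (supp s.1 ∩ supp y.1).Nonempty then 1 else 0))
    (hN : ∀ s y, N s y =
      ((-1) ^ ((supp s.1 ∩ supp y.1).card + 1) / 2 ^ ((supp y.1).card - 1)) *
        (1 - (if ((supp s.1)ᶜ ∩ (supp y.1)ᶜ).Nonempty then 1 else 0))) :
    M * N = 1 ∧ N * M = 1 := by
  constructor
  · ext y y'
    rw [Matrix.mul_apply, Matrix.one_apply]
    simp only [hM, hN]
    rw [SierpAux.MN_entry (supp y'.1) (supp y.1) (SierpAux.supp_nonempty y'.2)]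
    by_cases h : y = y'
    · subst h; simp
    · rw [if_neg (fun he => h (Subtype.ext (SierpAux.supp_bijective.1 he.symm))), if_neg h]
  · ext s s'
    rw [Matrix.mul_apply, Matrix.one_apply]
    simp only [hM, hN]
    rw [SierpAux.NM_entry (supp s.1) (supp s'.1) (SierpAux.supp_nonempty s.2)]
    by_cases h : s = s'
    · subst h; simp
    · rw [if_neg (fun he => h (Subtype.ext (SierpAux.supp_bijective.1 he))), if_neg h]
end

section
/- For all n ≥ 1 and all x ∈ F_2^n, the identity (−1)^{AND_n(x)} = cos((π/2^{n−1}) · ∑_{∅≠S⊆[n]} (−1)^{|S|−1} (⊕_{j∈S} x_j)) holds, where ⊕_{j∈S} x_j ∈ {0,1} is interpreted as an integer. -/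
open Finset

lemma term_eq (c : ℕ) : (-1 : ℝ) ^ (c - 1) * ((c % 2 : ℕ) : ℝ) = (1 - (-1 : ℝ) ^ c) / 2 := by
  rcases Nat.even_or_odd c with h | h
  · rw [Nat.even_iff.mp h, h.neg_one_pow]
    simp
  · have h1 : c % 2 = 1 := Nat.odd_iff.mp h
    have h2 : (-1 : ℝ) ^ c = -1 := h.neg_one_pow
    have h3 : Even (c - 1) := Nat.even_iff.mpr (by omega)
    rw [h1, h2, h3.neg_one_pow]
    norm_num

/-- Periodic Fourier decomposition of `AND_n`:
`(-1)^{AND_n(x)} = cos((π/2^(n-1)) ∑_{∅≠S⊆[n]} (-1)^{|S|-1} (⊕_{j∈S} x_j))`. -/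
theorem and_periodic_fourier (n : ℕ) (hn : 1 ≤ n) (x : Fin n → ZMod 2) :
    ((-1 : ℝ) ^ (∏ i, x i).val) =
      Real.cos ((Real.pi / 2 ^ (n - 1)) *
        ∑ S ∈ Finset.univ.powerset.filter (fun S : Finset (Fin n) => S.Nonempty),
          (-1 : ℝ) ^ (S.card - 1) * (((∑ j ∈ S, x j : ZMod 2)).val : ℝ)) := by
  set f : Finset (Fin n) → ℝ :=
    fun S => (-1 : ℝ) ^ (S.card - 1) * (((∑ j ∈ S, x j : ZMod 2)).val : ℝ) with hf
  have hsum : ∑ S ∈ Finset.univ.powerset.filter (fun S : Finset (Fin n) => S.Nonempty), f S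
      = ∑ S ∈ (Finset.univ : Finset (Fin n)).powerset, f S := by
    refine Finset.sum_subset (filter_subset _ _) ?_
    intro S hS hS'
    have : S = ∅ := by
      by_contra h
      exact hS' (mem_filter.mpr ⟨hS, nonempty_iff_ne_empty.mpr h⟩)
    subst this
    simp [hf]
  rw [hsum]
  by_cases hall : ∀ i, x i = 1
  · -- all-ones input
    have hprod : (∏ i, x i) = 1 := Finset.prod_eq_one fun i _ => hall i
    have hterm : ∀ S : Finset (Fin n), f S = (1 - (-1 : ℝ) ^ S.card) / 2 := by
      intro S
      have hs : (∑ j ∈ S, x j) = (S.card : ZMod 2) := by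
        simp [hall]
      rw [hf]
      simp only [hs, ZMod.val_natCast]
      exact term_eq S.card
    have hsum2 : ∑ S ∈ (Finset.univ : Finset (Fin n)).powerset, f S = 2 ^ (n - 1) := by
      rw [Finset.sum_congr rfl fun S _ => hterm S]
      have hne : (Finset.univ : Finset (Fin n)).Nonempty := by
        have : Nonempty (Fin n) := ⟨⟨0, hn⟩⟩
        exact univ_nonempty
      have halt : ∑ S ∈ (Finset.univ : Finset (Fin n)).powerset, (-1 : ℝ) ^ S.card = 0 := by
        have := Finset.sum_powerset_neg_one_pow_card_of_nonempty hne
        have : ((∑ m ∈ (Finset.univ : Finset (Fin n)).powerset, (-1 : ℤ) ^ m.card : ℤ) : ℝ)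
            = ((0 : ℤ) : ℝ) := by rw [this]
        push_cast at this
        convert this using 2
      rw [← Finset.sum_div, Finset.sum_sub_distrib, halt, sub_zero, Finset.sum_const,
        Finset.card_powerset, Finset.card_univ, Fintype.card_fin]
      have h2 : (2 : ℝ) ^ n = 2 ^ (n - 1) * 2 := by
        rw [← pow_succ, Nat.sub_add_cancel hn]
      simp only [nsmul_eq_mul, mul_one]
      push_cast
      rw [h2]
      ring
    rw [hsum2, hprod]
    have h2ne : (2 : ℝ) ^ (n - 1) ≠ 0 := by positivity
    rw [div_mul_cancel₀ _ h2ne, Real.cos_pi]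
    rw [show (1 : ZMod 2).val = 1 from rfl]
    norm_num
  · push_neg at hall
    obtain ⟨i, hi1⟩ := hall
    have hi : x i = 0 := by
      have : ∀ a : ZMod 2, a ≠ 1 → a = 0 := by decide
      exact this _ hi1
    have hprod : (∏ j, x j) = 0 := Finset.prod_eq_zero (mem_univ i) hi
    have key : ∀ t ∈ ((Finset.univ : Finset (Fin n)).erase i).powerset,
        f t + f (insert i t) = 0 := by
      intro t ht
      have hit : i ∉ t := fun h => (notMem_erase i univ) (mem_powerset.1 ht h)
      have hxor : (∑ j ∈ insert i t, x j) = ∑ j ∈ t, x j := by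
        rw [Finset.sum_insert hit, hi, zero_add]
      have hcard : (insert i t).card = t.card + 1 := Finset.card_insert_of_notMem hit
      rcases Nat.eq_zero_or_pos t.card with h0 | hpos
      · have : t = ∅ := card_eq_zero.mp h0
        subst this
        simp [hf, hi]
      · rw [hf]
        simp only [hxor, hcard]
        have hc : t.card = (t.card - 1) + 1 := (Nat.sub_add_cancel hpos).symm
        have hflip : (-1 : ℝ) ^ (t.card + 1 - 1) = -(-1 : ℝ) ^ (t.card - 1) := by
          rw [Nat.add_sub_cancel]
          conv_lhs => rw [hc]
          rw [pow_succ]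
          ring
        rw [hflip]
        ring
    have huniv : (Finset.univ : Finset (Fin n)) = insert i (Finset.univ.erase i) :=
      (Finset.insert_erase (mem_univ i)).symm
    have hsum0 : ∑ S ∈ (Finset.univ : Finset (Fin n)).powerset, f S = 0 := by
      rw [huniv, Finset.sum_powerset_insert (notMem_erase i univ),
        ← Finset.sum_add_distrib]
      exact Finset.sum_eq_zero key
    rw [hsum0, hprod, mul_zero, Real.cos_zero]
    simp
end

section
/- Let p ≥ 3 be prime and let ANF coefficients a_μ^{(j)} ∈ F_2 of Mod_{p,j}(x) = ⊕_{μ=0}^n a_μ^{(j)} C_n^μ(x) be arranged as vectors a_μ = (a_μ^{(0)},...,a_μ^{(p−1)}) ∈ F_2^p. Then they satisfy the linear recursion a_{μ+1} = M a_μ over F_2 where M = I + X^{(p)}, X^{(p)} being the cyclic shift matrix, with initial vector a_0 = (0,1,1,...,1)^T; moreover the kernel of M over F_2 is spanned by the all-ones vector, the all-ones vector is not in the image of M, and hence a_μ ≠ 0 for all μ ≥ 0. -/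
open Finset

/-- `Mod_{p,j}` with index `j : ZMod p` : zero iff the Hamming weight is `j` mod `p`. -/
def modp (p : ℕ) (j : ZMod p) {n : ℕ} (x : Fin n → ZMod 2) : ZMod 2 :=
  if ((∑ i, (x i).val : ℕ) : ZMod p) = j then 0 else 1

/-- The degree-`μ` ANF coefficient `a_μ^{(j)}` of the symmetric function `Mod_{p,j}`,
equal to the top ANF coefficient of `Mod_{p,j}` on `μ` variables. -/
def anfVec (p : ℕ) (μ : ℕ) (j : ZMod p) : ZMod 2 :=
  ∑ x : Fin μ → ZMod 2, modp p j x

lemma anf_zero (p : ℕ) (j : ZMod p) : anfVec p 0 j = if j = 0 then 0 else 1 := by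
  simp [anfVec, modp, eq_comm]

lemma anf_rec (p : ℕ) (μ : ℕ) (j : ZMod p) :
    anfVec p (μ + 1) j = anfVec p μ j + anfVec p μ (j - 1) := by
  rw [anfVec, ← Equiv.sum_comp (Fin.consEquiv fun _ : Fin (μ+1) => ZMod 2),
    Fintype.sum_prod_type]
  rw [show (Finset.univ : Finset (ZMod 2)) = {0, 1} from by decide]
  rw [Finset.sum_insert (by decide), Finset.sum_singleton]
  congr 1
  · rw [anfVec]
    apply Finset.sum_congr rfl
    intro f _
    simp [modp, Fin.sum_univ_succ]
  · rw [anfVec]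
    apply Finset.sum_congr rfl
    intro f _
    simp only [modp, Fin.consEquiv_apply, Fin.sum_univ_succ, Fin.cons_zero, Fin.cons_succ]
    have h1 : ((1 : ZMod 2).val + ∑ i, (f i).val : ℕ) = 1 + ∑ i, (f i).val := rfl
    rw [h1, Nat.cast_add, Nat.cast_one]
    congr 1
    rw [eq_iff_iff, eq_sub_iff_add_eq, add_comm]


lemma char2_add_eq_zero : ∀ {a b : ZMod 2}, a + b = 0 → a = b := by decide

lemma ker_const (p : ℕ) [NeZero p] (v : ZMod p → ZMod 2) :
    (∀ j, v j + v (j - 1) = 0) ↔ ∃ c : ZMod 2, v = fun _ => c := by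
  constructor
  · intro h
    have step : ∀ j : ZMod p, v j = v (j - 1) := fun j => char2_add_eq_zero (h j)
    have nat : ∀ n : ℕ, v (n : ZMod p) = v 0 := by
      intro n
      induction n with
      | zero => simp
      | succ k ih =>
        have := step ((k + 1 : ℕ) : ZMod p)
        rw [this]
        push_cast
        simpa using ih
    refine ⟨v 0, funext fun j => ?_⟩
    have hj := nat j.val
    rwa [ZMod.natCast_zmod_val] at hj
  · rintro ⟨c, rfl⟩ j
    exact CharTwo.add_self_eq_zero c

lemma not_allones (p : ℕ) (hp : p.Prime) (hp3 : 3 ≤ p) :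
    ¬ ∃ v : ZMod p → ZMod 2, ∀ j, v j + v (j - 1) = 1 := by
  haveI : Fact p.Prime := ⟨hp⟩
  rintro ⟨v, h⟩
  have hsum : ∑ j : ZMod p, (v j + v (j - 1)) = ∑ j : ZMod p, (1 : ZMod 2) :=
    Finset.sum_congr rfl fun j _ => h j
  rw [Finset.sum_add_distrib] at hsum
  have hshift : ∑ j : ZMod p, v (j - 1) = ∑ j : ZMod p, v j :=
    Fintype.sum_equiv (Equiv.subRight (1 : ZMod p)) _ _ (fun j => rfl)
  rw [hshift, CharTwo.add_self_eq_zero, Finset.sum_const, Finset.card_univ, ZMod.card,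
    nsmul_eq_mul, mul_one] at hsum
  have h2 : (2 : ℕ) ∣ p := (ZMod.natCast_eq_zero_iff p 2).mp hsum.symm
  have := (Nat.prime_dvd_prime_iff_eq Nat.prime_two hp).mp h2
  omega

lemma two_cases : ∀ c : ZMod 2, c = 0 ∨ c = 1 := by decide

lemma anf_nonconst (p : ℕ) (hp : p.Prime) (hp3 : 3 ≤ p) (μ : ℕ) :
    ∃ j k : ZMod p, anfVec p μ j ≠ anfVec p μ k := by
  haveI : Fact p.Prime := ⟨hp⟩
  induction μ with
  | zero =>
    refine ⟨1, 0, ?_⟩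
    rw [anf_zero, anf_zero, if_neg (one_ne_zero), if_pos rfl]
    decide
  | succ m ih =>
    by_contra hcon
    push_neg at hcon
    set c := anfVec p (m + 1) 0 with hc
    have hconst : ∀ j, anfVec p (m + 1) j = c := fun j => hcon j 0
    rcases two_cases c with h0 | h1
    · have : ∀ j : ZMod p, anfVec p m j + anfVec p m (j - 1) = 0 := by
        intro j; rw [← anf_rec, hconst j, h0]
      obtain ⟨d, hd⟩ := (ker_const p _).mp this
      obtain ⟨j, k, hjk⟩ := ih
      apply hjk
      rw [show anfVec p m = fun _ => d from hd]
    · exact not_allones p hp hp3 ⟨anfVec p m, fun j => by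
        rw [← anf_rec, hconst j, h1]⟩

/-- The ANF coefficient vectors of the mod-`p` functions satisfy `a_{μ+1} = (I + X) a_μ`
with `a_0 = (0,1,…,1)`; over `F_2` the kernel of `I + X` is spanned by the all-ones
vector, the all-ones vector is not in its image, and hence `a_μ ≠ 0` for all `μ`. -/
theorem modp_anf_recursion (p : ℕ) (hp : p.Prime) (hp3 : 3 ≤ p) :
    (∀ j : ZMod p, anfVec p 0 j = if j = 0 then 0 else 1) ∧
    (∀ (μ : ℕ) (j : ZMod p), anfVec p (μ + 1) j = anfVec p μ j + anfVec p μ (j - 1)) ∧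
    (∀ v : ZMod p → ZMod 2,
      (∀ j, v j + v (j - 1) = 0) ↔ ∃ c : ZMod 2, v = fun _ => c) ∧
    (¬ ∃ v : ZMod p → ZMod 2, ∀ j, v j + v (j - 1) = 1) ∧
    (∀ μ : ℕ, ∃ j : ZMod p, anfVec p μ j ≠ 0) := by
  haveI : Fact p.Prime := ⟨hp⟩
  refine ⟨anf_zero p, anf_rec p, ker_const p, not_allones p hp hp3, fun μ => ?_⟩
  obtain ⟨j, k, hjk⟩ := anf_nonconst p hp hp3 μ
  by_contra hall
  push_neg at hall
  exact hjk (by rw [hall j, hall k])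
end
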